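/- For every Hahn series g over ℂ(λ) with value group ℚ, there exists a unique Hahn series f over ℂ(λ) with value group ℚ such that λ·φ_p(f) − f = g. Moreover, if g = g_- + g_0 + g_+ with supp(g_-) ⊂ ℚ_{<0}, g_0 ∈ ℂ(λ) the constant coefficient, and supp(g_+) ⊂ ℚ_{>0}, then f = Σ_{k ≤ −1} λ^k φ_p^k(g_-) + g_0/(λ−1) − Σ_{k ≥ 0} λ^k φ_p^k(g_+). -/

import Mathlib

noncomputable section


open Classical

noncomputable abbrev LL := RatFunc ℂ

lemma X_sub_one_ne : (RatFunc.X : RatFunc ℂ) - 1 ≠ 0 := by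
  intro h
  rw [sub_eq_zero] at h
  have h2 := congrArg RatFunc.num h
  rw [RatFunc.num_X, RatFunc.num_one] at h2
  have := congrArg Polynomial.natDegree h2
  simp at this

lemma key_finite (h : HahnSeries ℚ (RatFunc ℂ)) {u : ℕ → ℚ} (hu : StrictAnti u) :
    {k : ℕ | h.coeff (u k) ≠ 0}.Finite := by
  by_contra hinf
  replace hinf : Set.Infinite {k : ℕ | h.coeff (u k) ≠ 0} := hinf
  have hsub : u '' {k | h.coeff (u k) ≠ 0} ⊆ h.support := by
    rintro x ⟨k, hk, rfl⟩; exact hk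
  have hwf : (u '' {k | h.coeff (u k) ≠ 0}).IsWF := h.isPWO_support.isWF.mono hsub
  have hne : (u '' {k | h.coeff (u k) ≠ 0}).Nonempty := hinf.nonempty.image u
  obtain ⟨k0, hk0, hk0e⟩ := hwf.min_mem hne
  obtain ⟨k1, hk1, hgt⟩ := hinf.exists_gt k0
  exact absurd (hwf.min_le hne ⟨k1, hk1, rfl⟩) (not_le.2 (hk0e ▸ hu hgt))

lemma key_ev (h : HahnSeries ℚ (RatFunc ℂ)) {u : ℕ → ℚ} (hu : StrictAnti u) :
    ∃ N, ∀ n, N ≤ n → h.coeff (u n) = 0 := by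
  obtain ⟨N, hN⟩ := (key_finite h hu).bddAbove
  refine ⟨N + 1, fun n hn => ?_⟩
  by_contra hne
  exact absurd (hN hne) (by omega)

lemma finsum_nat_succ {M : Type*} [AddCommMonoid M] (v : ℕ → M)
    (h : (Function.support v).Finite) : ∑ᶠ k, v k = v 0 + ∑ᶠ k, v (k + 1) := by
  obtain ⟨N, hN⟩ := h.bddAbove
  have h1 : Function.support v ⊆ ↑(Finset.range (N + 1)) := by
    intro k hk
    simp only [Finset.coe_range, Set.mem_Iio]
    exact Nat.lt_succ_of_le (hN hk)
  have h2 : Function.support (fun k => v (k + 1)) ⊆ ↑(Finset.range N) := by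
    intro k hk
    simp only [Finset.coe_range, Set.mem_Iio]
    have := hN hk
    omega
  rw [finsum_eq_sum_of_support_subset _ h1, finsum_eq_sum_of_support_subset _ h2,
    Finset.sum_range_succ', add_comm]


lemma isWF_scaled_union_neg {q : ℚ} (hq : 1 < q) {S : Set ℚ} (hS : S.IsWF)
    (hSneg : S ⊆ Set.Iio 0) :
    (⋃ m : ℕ, (fun x => x / q ^ (m + 1)) '' S).IsWF := by
  have hq0 : (0:ℚ) < q := lt_trans zero_lt_one hq
  rw [Set.isWF_iff_no_descending_seq]
  intro x hanti hmem'
  have hmem : ∀ n : ℕ, x n ∈ ⋃ m : ℕ, (fun x => x / q ^ (m + 1)) '' S := fun n => hmem' n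
  -- S is nonempty
  obtain ⟨t0, ⟨m0, rfl⟩, s0, hs0S, hs0e⟩ := hmem 0
  have hSne : S.Nonempty := ⟨s0, hs0S⟩
  set μ := hS.min hSne with hμ
  have hμS : μ ∈ S := hS.min_mem hSne
  have hμneg : μ < 0 := hSneg hμS
  have hx0 : x 0 < 0 := by
    rw [← hs0e]
    exact div_neg_of_neg_of_pos (hSneg hs0S) (pow_pos hq0 _)
  obtain ⟨M, hM⟩ := pow_unbounded_of_one_lt (μ / x 0) hq
  have hclaim : ∀ n : ℕ, x n ∈ (Finset.range M).sup
      (fun m => (fun y => y / q ^ (m + 1)) '' S) := by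
    intro n
    obtain ⟨t, ⟨m, rfl⟩, s, hsS, hse⟩ := hmem n
    rw [Finset.sup_set_eq_biUnion]
    have hxn : x n ≤ x 0 := hanti.antitone (Nat.zero_le n)
    have h1 : μ ≤ x 0 * q ^ (m + 1) := by
      have : s ≤ x 0 * q ^ (m + 1) := by
        rw [← div_le_iff₀ (pow_pos hq0 _)]
        exact le_of_eq_of_le hse hxn
      exact le_trans (hS.min_le hSne hsS) this
    have h2 : q ^ (m + 1) ≤ μ / x 0 := by
      rw [le_div_iff_of_neg hx0]
      linarith [h1]
    have hmM : m < M := by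
      have := lt_of_le_of_lt h2 hM
      have := (pow_lt_pow_iff_right₀ hq).mp this
      omega
    exact Set.mem_iUnion.2 ⟨m, Set.mem_iUnion.2 ⟨Finset.mem_range.2 hmM, ⟨s, hsS, hse⟩⟩⟩
  have hC : ((Finset.range M).sup (fun m => (fun y => y / q ^ (m + 1)) '' S)).IsWF := by
    rw [Finset.isWF_sup]
    intro m _
    rw [← Set.isPWO_iff_isWF] at hS ⊢
    refine hS.image_of_monotone ?_
    have : Monotone fun y : ℚ => y * (q ^ (m + 1))⁻¹ :=
      monotone_mul_right_of_nonneg (inv_nonneg.2 (le_of_lt (pow_pos hq0 _)))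
    simpa [div_eq_mul_inv] using this
  exact Set.isWF_iff_no_descending_seq.mp hC x hanti (fun n => hclaim n) |>.elim

lemma isWF_scaled_union_pos {q : ℚ} (hq : 1 < q) {S : Set ℚ} (hS : S.IsWF)
    (hSpos : S ⊆ Set.Ioi 0) :
    (⋃ m : ℕ, (fun x => x * q ^ m) '' S).IsWF := by
  have hq0 : (0:ℚ) < q := lt_trans zero_lt_one hq
  rw [Set.isWF_iff_no_descending_seq]
  intro x hanti hmem'
  have hmem : ∀ n : ℕ, x n ∈ ⋃ m : ℕ, (fun x => x * q ^ m) '' S := fun n => hmem' n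
  obtain ⟨t0, ⟨m0, rfl⟩, s0, hs0S, hs0e⟩ := hmem 0
  have hSne : S.Nonempty := ⟨s0, hs0S⟩
  set μ := hS.min hSne with hμ
  have hμS : μ ∈ S := hS.min_mem hSne
  have hμpos : 0 < μ := hSpos hμS
  obtain ⟨M, hM⟩ := pow_unbounded_of_one_lt (x 0 / μ) hq
  have hclaim : ∀ n : ℕ, x n ∈ (Finset.range M).sup
      (fun m => (fun y => y * q ^ m) '' S) := by
    intro n
    obtain ⟨t, ⟨m, rfl⟩, s, hsS, hse⟩ := hmem n
    rw [Finset.sup_set_eq_biUnion]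
    have hxn : x n ≤ x 0 := hanti.antitone (Nat.zero_le n)
    have h1 : μ * q ^ m ≤ x 0 := by
      have h2 : s * q ^ m ≤ x 0 := le_of_eq_of_le hse hxn
      have h3 : μ ≤ s := hS.min_le hSne hsS
      nlinarith [pow_pos hq0 m]
    have h2 : q ^ m ≤ x 0 / μ := by
      rw [le_div_iff₀ hμpos]
      linarith [h1]
    have hmM : m < M := (pow_lt_pow_iff_right₀ hq).mp (lt_of_le_of_lt h2 hM)
    exact Set.mem_iUnion.2 ⟨m, Set.mem_iUnion.2 ⟨Finset.mem_range.2 hmM, ⟨s, hsS, hse⟩⟩⟩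
  have hC : ((Finset.range M).sup (fun m => (fun y => y * q ^ m) '' S)).IsWF := by
    rw [Finset.isWF_sup]
    intro m _
    rw [← Set.isPWO_iff_isWF] at hS ⊢
    exact hS.image_of_monotone (monotone_mul_right_of_nonneg (le_of_lt (pow_pos hq0 _)))
  exact Set.isWF_iff_no_descending_seq.mp hC x hanti (fun n => hclaim n) |>.elim


def solCoeff (q : ℚ) (g : HahnSeries ℚ (RatFunc ℂ)) (γ : ℚ) : RatFunc ℂ :=
  if γ < 0 then ∑ᶠ m : ℕ, (RatFunc.X : RatFunc ℂ) ^ (-(m:ℤ) - 1) * g.coeff (γ * q ^ (m + 1))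
  else if 0 < γ then -∑ᶠ m : ℕ, (RatFunc.X : RatFunc ℂ) ^ m * g.coeff (γ / q ^ m)
  else g.coeff 0 / (RatFunc.X - 1)

variable {q : ℚ} (g : HahnSeries ℚ (RatFunc ℂ))

section
variable (hq : 1 < q)
include hq

lemma anti_neg {δ : ℚ} (hδ : δ < 0) : StrictAnti (fun m : ℕ => δ * q ^ (m + 1)) :=
  fun a b hab => mul_lt_mul_of_neg_left (pow_lt_pow_right₀ hq (by omega)) hδ

lemma anti_pos {δ : ℚ} (hδ : 0 < δ) : StrictAnti (fun m : ℕ => δ / q ^ m) := by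
  have hq0 : (0:ℚ) < q := lt_trans zero_lt_one hq
  exact fun a b hab =>
    div_lt_div_of_pos_left hδ (pow_pos hq0 a) (pow_lt_pow_right₀ hq hab)

lemma supp_neg_fin {δ : ℚ} (hδ : δ < 0) :
    (Function.support fun m : ℕ =>
      (RatFunc.X : RatFunc ℂ) ^ (-(m:ℤ) - 1) * g.coeff (δ * q ^ (m + 1))).Finite := by
  refine Set.Finite.subset (key_finite g (anti_neg hq hδ)) ?_
  intro m hm
  simp only [Function.mem_support] at hm
  simp only [Set.mem_setOf_eq]
  intro h0
  exact hm (by rw [h0, mul_zero])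

lemma supp_pos_fin {δ : ℚ} (hδ : 0 < δ) :
    (Function.support fun m : ℕ =>
      (RatFunc.X : RatFunc ℂ) ^ m * g.coeff (δ / q ^ m)).Finite := by
  refine Set.Finite.subset (key_finite g (anti_pos hq hδ)) ?_
  intro m hm
  simp only [Function.mem_support] at hm
  simp only [Set.mem_setOf_eq]
  intro h0
  exact hm (by rw [h0, mul_zero])

lemma solCoeff_isPWO : (Function.support (solCoeff q g)).IsPWO := by
  have hq0 : (0:ℚ) < q := lt_trans zero_lt_one hq
  have hA : (⋃ m : ℕ, (fun x => x / q ^ (m + 1)) '' (g.support ∩ Set.Iio 0)).IsWF :=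
    isWF_scaled_union_neg hq (g.isPWO_support.isWF.mono Set.inter_subset_left)
      Set.inter_subset_right
  have hB : (⋃ m : ℕ, (fun x => x * q ^ m) '' (g.support ∩ Set.Ioi 0)).IsWF :=
    isWF_scaled_union_pos hq (g.isPWO_support.isWF.mono Set.inter_subset_left)
      Set.inter_subset_right
  have hunion : (({0} : Set ℚ) ∪
      ((⋃ m : ℕ, (fun x => x / q ^ (m + 1)) '' (g.support ∩ Set.Iio 0)) ∪
       (⋃ m : ℕ, (fun x => x * q ^ m) '' (g.support ∩ Set.Ioi 0)))).IsWF :=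
    ((Set.finite_singleton 0).isWF).union (hA.union hB)
  refine (hunion.mono ?_).isPWO
  intro γ hγ
  simp only [Function.mem_support] at hγ
  rcases lt_trichotomy γ 0 with hneg | hzero | hpos
  · rw [solCoeff, if_pos hneg] at hγ
    have : ∃ m : ℕ, g.coeff (γ * q ^ (m + 1)) ≠ 0 := by
      by_contra hc
      push_neg at hc
      exact hγ (finsum_eq_zero_of_forall_eq_zero fun m => by rw [hc m, mul_zero])
    obtain ⟨m, hm⟩ := this
    refine Or.inr (Or.inl (Set.mem_iUnion.2 ⟨m, ⟨γ * q ^ (m + 1), ⟨hm,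
      mul_neg_of_neg_of_pos hneg (pow_pos hq0 _)⟩, ?_⟩⟩))
    field_simp
  · exact Or.inl (by simp [hzero])
  · rw [solCoeff, if_neg (not_lt.2 (le_of_lt hpos)), if_pos hpos, neg_ne_zero] at hγ
    have : ∃ m : ℕ, g.coeff (γ / q ^ m) ≠ 0 := by
      by_contra hc
      push_neg at hc
      exact hγ (finsum_eq_zero_of_forall_eq_zero fun m => by rw [hc m, mul_zero])
    obtain ⟨m, hm⟩ := this
    refine Or.inr (Or.inr (Set.mem_iUnion.2 ⟨m, ⟨γ / q ^ m, ⟨hm,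
      div_pos hpos (pow_pos hq0 _)⟩, ?_⟩⟩))
    field_simp

end

def solF (hq : 1 < q) : HahnSeries ℚ (RatFunc ℂ) := ⟨solCoeff q g, solCoeff_isPWO g hq⟩

lemma anti_neg' {q : ℚ} (hq : 1 < q) {δ : ℚ} (hδ : δ < 0) :
    StrictAnti (fun m : ℕ => δ * q ^ m) :=
  fun a b hab => mul_lt_mul_of_neg_left (pow_lt_pow_right₀ hq hab) hδ

lemma anti_pos' {q : ℚ} (hq : 1 < q) {δ : ℚ} (hδ : 0 < δ) :
    StrictAnti (fun m : ℕ => δ / q ^ (m + 1)) := by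
  have hq0 : (0:ℚ) < q := lt_trans zero_lt_one hq
  exact fun a b hab =>
    div_lt_div_of_pos_left hδ (pow_pos hq0 _) (pow_lt_pow_right₀ hq (by omega))

lemma X_mul_zpow (m : ℕ) :
    (RatFunc.X : RatFunc ℂ) * (RatFunc.X : RatFunc ℂ) ^ (-(m:ℤ) - 1)
      = (RatFunc.X : RatFunc ℂ) ^ (-(m:ℤ)) := by
  have h : (-(m:ℤ)) = 1 + (-(m:ℤ) - 1) := by ring
  conv_rhs => rw [h, zpow_add₀ RatFunc.X_ne_zero, zpow_one]

lemma solCoeff_eqn {q : ℚ} (hq : 1 < q) (g : HahnSeries ℚ (RatFunc ℂ)) (γ : ℚ) :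
    (RatFunc.X : RatFunc ℂ) * solCoeff q g (γ / q) - solCoeff q g γ = g.coeff γ := by
  have hq0 : (0:ℚ) < q := lt_trans zero_lt_one hq
  have hqne : q ≠ 0 := ne_of_gt hq0
  rcases lt_trichotomy γ 0 with hneg | hzero | hpos
  · -- negative case
    have hδ : γ / q < 0 := div_neg_of_neg_of_pos hneg hq0
    have e1 : solCoeff q g (γ / q)
        = ∑ᶠ m : ℕ, (RatFunc.X : RatFunc ℂ) ^ (-(m:ℤ) - 1) * g.coeff (γ * q ^ m) := by
      rw [solCoeff, if_pos hδ]
      refine finsum_congr fun m => ?_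
      rw [show γ / q * q ^ (m + 1) = γ * q ^ m by
        field_simp [pow_succ]; ring]
    have hfin1 : (Function.support fun m : ℕ =>
        (RatFunc.X : RatFunc ℂ) ^ (-(m:ℤ) - 1) * g.coeff (γ * q ^ m)).Finite := by
      refine Set.Finite.subset (key_finite g (anti_neg' hq hneg)) ?_
      intro m hm h0
      exact hm (by simp only [h0, mul_zero])
    have hfinw : (Function.support fun m : ℕ =>
        (RatFunc.X : RatFunc ℂ) ^ (-(m:ℤ)) * g.coeff (γ * q ^ m)).Finite := by
      refine Set.Finite.subset (key_finite g (anti_neg' hq hneg)) ?_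
      intro m hm h0
      exact hm (by simp only [h0, mul_zero])
    have e2 : (RatFunc.X : RatFunc ℂ) * solCoeff q g (γ / q)
        = ∑ᶠ m : ℕ, (RatFunc.X : RatFunc ℂ) ^ (-(m:ℤ)) * g.coeff (γ * q ^ m) := by
      rw [e1, mul_finsum _ _]
      exact finsum_congr fun m => by rw [← mul_assoc, X_mul_zpow]
    have e3 : ∑ᶠ m : ℕ, (RatFunc.X : RatFunc ℂ) ^ (-(m:ℤ)) * g.coeff (γ * q ^ m)
        = g.coeff γ + solCoeff q g γ := by
      rw [finsum_nat_succ _ hfinw, solCoeff, if_pos hneg]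
      congr 1
      · simp
      · refine finsum_congr fun m => ?_
        have h1 : (-(((m + 1 : ℕ)):ℤ)) = -(m:ℤ) - 1 := by push_cast; ring
        rw [h1]
    rw [e2, e3]
    ring
  · -- zero case
    subst hzero
    rw [zero_div]
    rw [solCoeff]
    simp only [lt_irrefl, if_neg (lt_irrefl (0:ℚ)), if_neg (not_lt.2 (le_refl (0:ℚ))), ↓reduceIte]
    have hX1 : (RatFunc.X : RatFunc ℂ) - 1 ≠ 0 := X_sub_one_ne
    field_simp
  · -- positive case
    have hδ : 0 < γ / q := div_pos hpos hq0
    have e1 : solCoeff q g (γ / q)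
        = -∑ᶠ m : ℕ, (RatFunc.X : RatFunc ℂ) ^ m * g.coeff (γ / q ^ (m + 1)) := by
      rw [solCoeff, if_neg (not_lt.2 (le_of_lt hδ)), if_pos hδ]
      congr 1
      refine finsum_congr fun m => ?_
      rw [show γ / q / q ^ m = γ / q ^ (m + 1) by rw [div_div, ← pow_succ']]
    have hfin1 : (Function.support fun m : ℕ =>
        (RatFunc.X : RatFunc ℂ) ^ m * g.coeff (γ / q ^ (m + 1))).Finite := by
      refine Set.Finite.subset (key_finite g (anti_pos' hq hpos)) ?_
      intro m hm h0
      exact hm (by simp only [h0, mul_zero])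
    have hfinv : (Function.support fun m : ℕ =>
        (RatFunc.X : RatFunc ℂ) ^ m * g.coeff (γ / q ^ m)).Finite := supp_pos_fin g hq hpos
    have e2 : (RatFunc.X : RatFunc ℂ) * solCoeff q g (γ / q)
        = -∑ᶠ m : ℕ, (RatFunc.X : RatFunc ℂ) ^ (m + 1) * g.coeff (γ / q ^ (m + 1)) := by
      rw [e1, mul_neg, mul_finsum _ _]
      congr 1
      exact finsum_congr fun m => by rw [← mul_assoc, ← pow_succ']
    have e3 : ∑ᶠ m : ℕ, (RatFunc.X : RatFunc ℂ) ^ m * g.coeff (γ / q ^ m)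
        = g.coeff γ + ∑ᶠ m : ℕ, (RatFunc.X : RatFunc ℂ) ^ (m + 1) * g.coeff (γ / q ^ (m + 1)) := by
      rw [finsum_nat_succ _ hfinv]
      congr 1
      simp
    rw [e2, solCoeff, if_neg (not_lt.2 (le_of_lt hpos)), if_pos hpos]
    rw [show ∑ᶠ m : ℕ, (RatFunc.X : RatFunc ℂ) ^ (m + 1) * g.coeff (γ / q ^ (m + 1))
      = (∑ᶠ m : ℕ, (RatFunc.X : RatFunc ℂ) ^ m * g.coeff (γ / q ^ m)) - g.coeff γ by
        rw [e3]; ring]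
    ring

lemma uniq_zero {q : ℚ} (hq : 1 < q) (h : HahnSeries ℚ (RatFunc ℂ))
    (hrel : ∀ γ : ℚ, (RatFunc.X : RatFunc ℂ) * h.coeff (γ / q) = h.coeff γ) : h = 0 := by
  have hq0 : (0:ℚ) < q := lt_trans zero_lt_one hq
  have hqne : q ≠ 0 := ne_of_gt hq0
  ext γ
  rw [HahnSeries.coeff_zero]
  rcases lt_trichotomy γ 0 with hneg | hzero | hpos
  · have key : ∀ n : ℕ, h.coeff (γ * q ^ n) = (RatFunc.X : RatFunc ℂ) ^ n * h.coeff γ := by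
      intro n
      induction n with
      | zero => simp
      | succ n ih =>
        have h1 : γ * q ^ (n + 1) / q = γ * q ^ n := by
          field_simp [pow_succ]
          ring
        calc h.coeff (γ * q ^ (n + 1))
            = RatFunc.X * h.coeff (γ * q ^ (n + 1) / q) := (hrel _).symm
          _ = RatFunc.X * ((RatFunc.X : RatFunc ℂ) ^ n * h.coeff γ) := by rw [h1, ih]
          _ = (RatFunc.X : RatFunc ℂ) ^ (n + 1) * h.coeff γ := by ring
    obtain ⟨N, hN⟩ := key_ev h (anti_neg' hq hneg)
    have := (hN N le_rfl).symm.trans (key N)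
    rcases mul_eq_zero.mp this.symm with h0 | h0
    · exact absurd h0 (pow_ne_zero _ RatFunc.X_ne_zero)
    · exact h0
  · subst hzero
    have := hrel 0
    rw [zero_div] at this
    have h2 : ((RatFunc.X : RatFunc ℂ) - 1) * h.coeff 0 = 0 := by
      rw [sub_mul, one_mul, this, sub_self]
    rcases mul_eq_zero.mp h2 with h0 | h0
    · exact absurd h0 X_sub_one_ne
    · exact h0
  · have key : ∀ n : ℕ, h.coeff γ = (RatFunc.X : RatFunc ℂ) ^ n * h.coeff (γ / q ^ n) := by
      intro n
      induction n with
      | zero => simp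
      | succ n ih =>
        have h1 : γ / q ^ n / q = γ / q ^ (n + 1) := by
          rw [div_div, ← pow_succ]
        calc h.coeff γ = (RatFunc.X : RatFunc ℂ) ^ n * h.coeff (γ / q ^ n) := ih
          _ = (RatFunc.X : RatFunc ℂ) ^ n * (RatFunc.X * h.coeff (γ / q ^ n / q)) := by
              rw [hrel _]
          _ = (RatFunc.X : RatFunc ℂ) ^ (n + 1) * h.coeff (γ / q ^ (n + 1)) := by
              rw [h1]; ring
    obtain ⟨N, hN⟩ := key_ev h (anti_pos hq hpos)
    rw [key N, hN N le_rfl, mul_zero]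



/-- For every Hahn series `g` over `ℂ(λ)` (here `RatFunc ℂ`, `λ = RatFunc.X`) with value
group `ℚ`, there is a unique Hahn series `f` with `λ·φ_p(f) − f = g`. Moreover the solution
is given by `f = Σ_{k ≤ −1} λ^k φ_p^k(g_-) + g_0/(λ−1) − Σ_{k ≥ 0} λ^k φ_p^k(g_+)`,
expressed here coefficientwise: at `0` the coefficient is `g_0/(λ−1)`, at negative `γ` it
is the (finite) sum `Σ_{k ≤ −1} λ^k g.coeff (γ/p^k)`, and at positive `γ` it is
`− Σ_{k ≥ 0} λ^k g.coeff (γ/p^k)`. -/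
theorem existsUnique_lambda_phi_sub_one (p : ℕ) (hp : 2 ≤ p)
    (φ : HahnSeries ℚ (RatFunc ℂ) → HahnSeries ℚ (RatFunc ℂ))
    (hφ : ∀ (f : HahnSeries ℚ (RatFunc ℂ)) (γ : ℚ), (φ f).coeff γ = f.coeff (γ / p))
    (g : HahnSeries ℚ (RatFunc ℂ)) :
    (∃! f : HahnSeries ℚ (RatFunc ℂ), (RatFunc.X : RatFunc ℂ) • φ f - f = g) ∧
    ∀ f : HahnSeries ℚ (RatFunc ℂ), (RatFunc.X : RatFunc ℂ) • φ f - f = g →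
      f.coeff 0 = g.coeff 0 / ((RatFunc.X : RatFunc ℂ) - 1) ∧
      (∀ γ : ℚ, γ < 0 →
        f.coeff γ = ∑ᶠ k : {k : ℤ // k ≤ -1},
          (RatFunc.X : RatFunc ℂ) ^ (k : ℤ) * g.coeff (γ / (p : ℚ) ^ (k : ℤ))) ∧
      (∀ γ : ℚ, 0 < γ →
        f.coeff γ = -∑ᶠ k : ℕ,
          (RatFunc.X : RatFunc ℂ) ^ k * g.coeff (γ / (p : ℚ) ^ k)) := by
  have hq : (1:ℚ) < (p:ℚ) := by exact_mod_cast lt_of_lt_of_le one_lt_two hp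
  set F : HahnSeries ℚ (RatFunc ℂ) := solF g hq with hF
  have hFsol : (RatFunc.X : RatFunc ℂ) • φ F - F = g := by
    ext γ
    rw [HahnSeries.coeff_sub, HahnSeries.coeff_smul, hφ, smul_eq_mul]
    exact solCoeff_eqn hq g γ
  have huniq : ∀ f : HahnSeries ℚ (RatFunc ℂ),
      (RatFunc.X : RatFunc ℂ) • φ f - f = g → f = F := by
    intro f hf
    have hrel : ∀ γ : ℚ, (RatFunc.X : RatFunc ℂ) * (f - F).coeff (γ / p) = (f - F).coeff γ := by
      intro γ
      have h1 := congrArg (fun x => HahnSeries.coeff x γ) hf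
      have h2 := congrArg (fun x => HahnSeries.coeff x γ) hFsol
      simp only [HahnSeries.coeff_sub, HahnSeries.coeff_smul, hφ, smul_eq_mul] at h1 h2
      rw [HahnSeries.coeff_sub, HahnSeries.coeff_sub]
      linear_combination h1 - h2
    have := uniq_zero hq (f - F) hrel
    rwa [sub_eq_zero] at this
  refine ⟨⟨F, hFsol, huniq⟩, ?_⟩
  intro f hf
  have hfF : f = F := huniq f hf
  subst hfF
  refine ⟨?_, ?_, ?_⟩
  · show solCoeff (p:ℚ) g 0 = _
    rw [solCoeff]
    simp
  · intro γ hγ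
    show solCoeff (p:ℚ) g γ = _
    rw [solCoeff, if_pos hγ]
    refine finsum_eq_of_bijective (fun m : ℕ => (⟨-(m:ℤ) - 1, by omega⟩ : {k : ℤ // k ≤ -1}))
      ⟨fun a b hab => by
        have h0 : -(a:ℤ) - 1 = -(b:ℤ) - 1 := congrArg Subtype.val hab
        omega, ?_⟩ ?_
    · rintro ⟨k, hk⟩
      refine ⟨(-k - 1).toNat, ?_⟩
      ext
      simp only
      omega
    · intro m
      congr 1
      have h1 : γ / (p:ℚ) ^ (-(m:ℤ) - 1) = γ * (p:ℚ) ^ (m + 1) := by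
        rw [show (-(m:ℤ) - 1) = -((m+1 : ℕ) : ℤ) by push_cast; ring, zpow_neg, zpow_natCast]
        have hppos : (0:ℚ) < (p:ℚ) ^ (m + 1) := pow_pos (by linarith) _
        field_simp
      rw [h1]
  · intro γ hγ
    show solCoeff (p:ℚ) g γ = _
    rw [solCoeff, if_neg (not_lt.2 (le_of_lt hγ)), if_pos hγ]
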